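/- For probability measures μ and ν on a Polish space X, the KL divergence satisfies the duality formula: KL(μ‖ν) equals the supremum over bounded continuous functions φ on X of E_μ[φ] − log(E_ν[e^φ]). -/

import Mathlib

open MeasureTheory Real ENNReal Filter Topology
open scoped Classical

noncomputable def klDiv {X : Type*} [MeasurableSpace X] (μ ν : Measure X) : EReal :=
  if μ ≪ ν ∧ Integrable (fun x => Real.log (μ.rnDeriv ν x).toReal) μ
  then ((∫ x, Real.log (μ.rnDeriv ν x).toReal ∂μ : ℝ) : EReal)
  else ⊤

noncomputable def tvDist {X : Type*} [MeasurableSpace X] (μ ν : Measure X) : ℝ :=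
  ⨆ A : {A : Set X // MeasurableSet A}, |(μ A).toReal - (ν A).toReal|

set_option linter.unusedSectionVars false


lemma clamp_abs_le' {t n : ℝ} (hn : 0 ≤ n) : |max (min t n) (-n)| ≤ |t| := by
  rw [abs_le]
  constructor
  · calc -|t| ≤ min t n := le_min (neg_abs_le t) (by linarith [abs_nonneg t])
    _ ≤ _ := le_max_left _ _
  · exact max_le (min_le_of_left_le (le_abs_self t)) (by linarith [abs_nonneg t])

lemma exp_lip' {a b C : ℝ} (ha : a ≤ C) (hb : b ≤ C) : |exp a - exp b| ≤ exp C * |a - b| := by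
  have key : ∀ u v : ℝ, u ≤ v → v ≤ C → exp v - exp u ≤ exp C * (v - u) := by
    intro u v huv hvC
    have h1 : exp u = exp v * exp (u - v) := by rw [← Real.exp_add]; ring_nf
    have h2 : (u - v) + 1 ≤ exp (u - v) := Real.add_one_le_exp _
    have h3 : exp v ≤ exp C := Real.exp_le_exp.mpr hvC
    nlinarith [Real.exp_pos v, Real.exp_pos C]
  rcases le_total a b with h | h
  · rw [abs_of_nonpos (by simp [Real.exp_le_exp, h]), abs_of_nonpos (by linarith : a - b ≤ 0)]
    linarith [key a b h hb]
  · rw [abs_of_nonneg (by simp [Real.exp_le_exp, h]), abs_of_nonneg (by linarith)]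
    linarith [key b a h ha]

lemma mul_neg_log_le_one' {t : ℝ} (ht : 0 ≤ t) : t * max (-Real.log t) 0 ≤ 1 := by
  rcases eq_or_lt_of_le ht with h | h
  · simp [← h]
  rcases le_total 1 t with h1 | h1
  · have : Real.log t ≥ 0 := Real.log_nonneg h1
    rw [max_eq_right (by linarith)]; simp
  · have hlog : -Real.log t ≤ 1/t - 1 := by
      have := Real.log_le_sub_one_of_pos (x := 1/t) (by positivity)
      rw [Real.log_div one_ne_zero h.ne', Real.log_one] at this
      linarith
    rcases le_total (-Real.log t) 0 with h2 | h2
    · rw [max_eq_right h2]; simp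
    · rw [max_eq_left h2]
      calc t * (-Real.log t) ≤ t * (1/t - 1) := by nlinarith
      _ = 1 - t := by field_simp
      _ ≤ 1 := by linarith

lemma aux_jensen' {X : Type*} [MeasurableSpace X] {ρ : Measure X} [IsProbabilityMeasure ρ] {h : X → ℝ}
    (hint : Integrable h ρ) (hexp : Integrable (fun x => Real.exp (h x)) ρ) :
    ∫ x, h x ∂ρ ≤ Real.log (∫ x, Real.exp (h x) ∂ρ) := by
  have h1 : Real.exp (⨍ x, h x ∂ρ) ≤ ⨍ x, Real.exp (h x) ∂ρ :=
    convexOn_exp.map_average_le Real.continuous_exp.continuousOn isClosed_univ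
      (Eventually.of_forall fun x => Set.mem_univ _) hint hexp
  rw [average_eq_integral, average_eq_integral] at h1
  calc ∫ x, h x ∂ρ = Real.log (Real.exp (∫ x, h x ∂ρ)) := (Real.log_exp _).symm
  _ ≤ _ := Real.log_le_log (Real.exp_pos _) h1

lemma integrable_of_abs_le' {X : Type*} [MeasurableSpace X] {ρ : Measure X} [IsFiniteMeasure ρ]
    {h : X → ℝ} {C : ℝ} (hm : AEStronglyMeasurable h ρ) (hb : ∀ x, |h x| ≤ C) : Integrable h ρ :=
  Integrable.mono' (integrable_const C) hm
    (Eventually.of_forall fun x => by simpa [Real.norm_eq_abs] using hb x)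


lemma aux_gibbs {X : Type*} [MeasurableSpace X] {μ ν : Measure X}
    [IsProbabilityMeasure μ] [IsProbabilityMeasure ν] (hμν : μ ≪ ν)
    (hf : Integrable (fun x => Real.log (μ.rnDeriv ν x).toReal) μ)
    {φ : X → ℝ} {C : ℝ} (hφm : Measurable φ) (hφb : ∀ x, |φ x| ≤ C) :
    ∫ x, φ x ∂μ - Real.log (∫ x, Real.exp (φ x) ∂ν) ≤
      ∫ x, Real.log (μ.rnDeriv ν x).toReal ∂μ := by
  set g : X → ℝ := fun x => (μ.rnDeriv ν x).toReal with hgdef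
  have hgm : Measurable g := (Measure.measurable_rnDeriv μ ν).ennreal_toReal
  have hφμ : Integrable φ μ := integrable_of_abs_le' hφm.aestronglyMeasurable hφb
  have heφν : Integrable (fun x => Real.exp (φ x)) ν :=
    integrable_of_abs_le' (Real.measurable_exp.comp hφm).aestronglyMeasurable (fun x => by
      rw [abs_of_nonneg (Real.exp_pos _).le]
      exact (Real.exp_le_exp.mpr (abs_le.mp (hφb x)).2).trans (le_abs_self _))
  set h : X → ℝ := fun x => φ x - Real.log (g x) with hhdef
  have hhm : Measurable h := hφm.sub (Real.measurable_log.comp hgm)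
  have hhint : Integrable h μ := hφμ.sub hf
  have hpt : ∀ x, g x * Real.exp (h x) ≤ Real.exp (φ x) := by
    intro x
    rcases eq_or_lt_of_le (ENNReal.toReal_nonneg : 0 ≤ g x) with h0 | h0
    · have hz : g x = 0 := h0.symm
      rw [hz, zero_mul]; exact (Real.exp_pos _).le
    · have : Real.exp (h x) = Real.exp (φ x) / g x := by
        rw [hhdef]; rw [Real.exp_sub, Real.exp_log h0]
      rw [this]; field_simp
      exact (div_self (show g x ≠ 0 from h0.ne')).le
  have hgeν : Integrable (fun x => g x * Real.exp (h x)) ν :=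
    Integrable.mono' heφν ((hgm.mul (Real.measurable_exp.comp hhm)).aestronglyMeasurable)
      (Eventually.of_forall fun x => by
        rw [Real.norm_eq_abs, abs_of_nonneg (by positivity)]; exact hpt x)
  have hehμ : Integrable (fun x => Real.exp (h x)) μ :=
    (integrable_rnDeriv_smul_iff hμν).mp (by simpa [smul_eq_mul] using hgeν)
  have heq : ∫ x, Real.exp (h x) ∂μ = ∫ x, g x * Real.exp (h x) ∂ν := by
    rw [← integral_rnDeriv_smul hμν]; simp [smul_eq_mul]; rfl
  have hle : ∫ x, Real.exp (h x) ∂μ ≤ ∫ x, Real.exp (φ x) ∂ν := by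
    rw [heq]; exact integral_mono hgeν heφν hpt
  have hJ := aux_jensen' hhint hehμ
  have hpos : 0 < ∫ x, Real.exp (h x) ∂μ := integral_exp_pos hehμ
  have hlog : Real.log (∫ x, Real.exp (h x) ∂μ) ≤ Real.log (∫ x, Real.exp (φ x) ∂ν) :=
    Real.log_le_log hpos hle
  have hsub : ∫ x, h x ∂μ = ∫ x, φ x ∂μ - ∫ x, Real.log (g x) ∂μ := integral_sub hφμ hf
  rw [hsub] at hJ
  linarith


lemma aux_approx {X : Type*} [MeasurableSpace X] [TopologicalSpace X] [PolishSpace X] [BorelSpace X]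
    {μ ν : Measure X} [IsProbabilityMeasure μ] [IsProbabilityMeasure ν]
    {ψ : X → ℝ} {C : ℝ} (hC : 0 ≤ C) (hψm : Measurable ψ) (hψb : ∀ x, |ψ x| ≤ C)
    {ε : ℝ} (hε : 0 < ε) :
    ∃ φ : BoundedContinuousFunction X ℝ,
      ∫ x, ψ x ∂μ - Real.log (∫ x, Real.exp (ψ x) ∂ν) - ε ≤
        ∫ x, φ x ∂μ - Real.log (∫ x, Real.exp (φ x) ∂ν) := by
  haveI : NormalSpace X := by
    letI := TopologicalSpace.pseudoMetrizableSpacePseudoMetric X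
    infer_instance
  set ρ : Measure X := μ + ν with hρdef
  set δ : ℝ := ε / (2 * (1 + Real.exp (2 * C))) with hδdef
  have hδ : 0 < δ := by positivity
  have hψρ : Integrable ψ ρ := integrable_of_abs_le' hψm.aestronglyMeasurable hψb
  obtain ⟨φ₀, hφ₀, -⟩ := (memLp_one_iff_integrable.mpr hψρ).exists_boundedContinuous_eLpNorm_sub_le
    ENNReal.one_ne_top (ε := ENNReal.ofReal δ) (ne_of_gt (ENNReal.ofReal_pos.mpr hδ))
  -- the clamped function
  set φfun : X → ℝ := fun x => max (min (φ₀ x) C) (-C) with hφfun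
  have hφcont : Continuous φfun := (φ₀.continuous.min continuous_const).max continuous_const
  have hφbd : ∀ x, |φfun x| ≤ C := by
    intro x
    rw [abs_le]
    exact ⟨le_max_right _ _, max_le (min_le_right _ _) (by linarith)⟩
  set φ : BoundedContinuousFunction X ℝ :=
    ⟨⟨φfun, hφcont⟩, 2 * C, fun x y => by
      have := hφbd x; have := hφbd y
      rw [Real.dist_eq, abs_le] at *
      constructor <;> simp at * <;> linarith⟩ with hφdef
  have hφx : ∀ x, φ x = max (min (φ₀ x) C) (-C) := fun x => rfl
  have hclose : ∀ x, |φ x - ψ x| ≤ |φ₀ x - ψ x| := by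
    intro x
    rw [hφx]
    have hb := abs_le.mp (hψb x)
    rcases le_total (φ₀ x) C with h1 | h1 <;> rcases le_total (-C) (φ₀ x) with h2 | h2
    · rw [min_eq_left h1, max_eq_left h2]
    · rw [min_eq_left h1, max_eq_right h2, abs_of_nonpos (by linarith)]
      rcases abs_cases (φ₀ x - ψ x) with ⟨he, _⟩ | ⟨he, _⟩ <;> linarith
    · rw [min_eq_right h1, max_eq_left (by linarith)]
      rw [abs_of_nonneg (by linarith)]
      rcases abs_cases (φ₀ x - ψ x) with ⟨he, _⟩ | ⟨he, _⟩ <;> linarith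
    · have : C ≤ -C := le_trans h1 h2
      have hC0 : C = 0 := le_antisymm (by linarith) hC
      rw [min_eq_right h1, max_eq_left (by linarith)]
      rw [abs_of_nonneg (by linarith)]
      rcases abs_cases (φ₀ x - ψ x) with ⟨he, _⟩ | ⟨he, _⟩ <;> linarith
  -- integrability facts
  have hφ₀m : Measurable (φ₀ : X → ℝ) := φ₀.continuous.measurable
  have hsubρ : Integrable (fun x => |φ₀ x - ψ x|) ρ := ((φ₀.integrable ρ).sub hψρ).abs
  have hL1 : ∫ x, |φ₀ x - ψ x| ∂ρ ≤ δ := by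
    have h1 : ∫ x, |φ₀ x - ψ x| ∂ρ = (eLpNorm (ψ - (φ₀ : X → ℝ)) 1 ρ).toReal := by
      rw [eLpNorm_one_eq_lintegral_enorm,
        ← integral_norm_eq_lintegral_enorm (hψρ.sub (φ₀.integrable ρ)).aestronglyMeasurable]
      congr 1
      ext x
      rw [Pi.sub_apply, Real.norm_eq_abs, abs_sub_comm]
    rw [h1]
    calc (eLpNorm (ψ - (φ₀ : X → ℝ)) 1 ρ).toReal ≤ (ENNReal.ofReal δ).toReal :=
          ENNReal.toReal_mono ENNReal.ofReal_ne_top hφ₀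
    _ = δ := ENNReal.toReal_ofReal hδ.le
  have hint : ∀ κ : Measure X, IsProbabilityMeasure κ → Integrable (fun x => |φ₀ x - ψ x|) κ := by
    intro κ _
    exact ((φ₀.integrable κ).sub (integrable_of_abs_le' hψm.aestronglyMeasurable hψb)).abs
  have hsplit : ∫ x, |φ₀ x - ψ x| ∂ρ = ∫ x, |φ₀ x - ψ x| ∂μ + ∫ x, |φ₀ x - ψ x| ∂ν := by
    rw [hρdef]; exact integral_add_measure (hint μ inferInstance) (hint ν inferInstance)
  have hL1κ : ∀ κ : Measure X, κ = μ ∨ κ = ν → ∫ x, |φ x - ψ x| ∂κ ≤ δ := by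
    intro κ hκ
    haveI : IsProbabilityMeasure κ := by rcases hκ with h | h <;> rw [h] <;> infer_instance
    have hψκ : Integrable ψ κ := integrable_of_abs_le' hψm.aestronglyMeasurable hψb
    have h1 : ∫ x, |φ x - ψ x| ∂κ ≤ ∫ x, |φ₀ x - ψ x| ∂κ :=
      integral_mono ((φ.integrable κ).sub hψκ).abs (hint κ inferInstance) hclose
    have h2 : ∫ x, |φ₀ x - ψ x| ∂κ ≤ ∫ x, |φ₀ x - ψ x| ∂ρ := by
      rw [hsplit]
      have hnν := integral_nonneg (f := fun x => |φ₀ x - ψ x|) (fun x => abs_nonneg (φ₀ x - ψ x)) (μ := ν)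
      have hnμ := integral_nonneg (f := fun x => |φ₀ x - ψ x|) (fun x => abs_nonneg (φ₀ x - ψ x)) (μ := μ)
      rcases hκ with h | h <;> rw [h] <;> linarith
    linarith
  have hψμ : Integrable ψ μ := integrable_of_abs_le' hψm.aestronglyMeasurable hψb
  have hψν : Integrable ψ ν := integrable_of_abs_le' hψm.aestronglyMeasurable hψb
  have hIμ : |∫ x, φ x ∂μ - ∫ x, ψ x ∂μ| ≤ δ := by
    rw [← integral_sub (φ.integrable μ) hψμ]
    calc |∫ x, (φ x - ψ x) ∂μ| ≤ ∫ x, |φ x - ψ x| ∂μ := by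
          simpa [Real.norm_eq_abs] using
            norm_integral_le_integral_norm (μ := μ) (fun x => φ x - ψ x)
    _ ≤ δ := hL1κ μ (Or.inl rfl)
  have hexpψ : Integrable (fun x => Real.exp (ψ x)) ν := integrable_of_abs_le'
      (Real.measurable_exp.comp hψm).aestronglyMeasurable (C := Real.exp C) (fun x => by
        rw [abs_of_nonneg (Real.exp_pos _).le]
        exact Real.exp_le_exp.mpr (abs_le.mp (hψb x)).2)
  have hexpφ : Integrable (fun x => Real.exp (φ x)) ν := integrable_of_abs_le'
      (Real.measurable_exp.comp φ.continuous.measurable).aestronglyMeasurable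
      (C := Real.exp C) (fun x => by
        rw [abs_of_nonneg (Real.exp_pos _).le]
        exact Real.exp_le_exp.mpr (abs_le.mp (hφbd x)).2)
  have hEν : ∫ x, Real.exp (φ x) ∂ν ≤ ∫ x, Real.exp (ψ x) ∂ν + Real.exp C * δ := by
    have hmono : ∫ x, (Real.exp (φ x) - Real.exp (ψ x)) ∂ν ≤
        ∫ x, Real.exp C * |φ x - ψ x| ∂ν := by
      refine integral_mono (hexpφ.sub hexpψ) (((φ.integrable ν).sub hψν).abs.const_mul _) ?_
      intro x
      exact (le_abs_self _).trans (exp_lip' (abs_le.mp (hφbd x)).2 (abs_le.mp (hψb x)).2)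
    rw [integral_sub hexpφ hexpψ, integral_const_mul] at hmono
    have := hL1κ ν (Or.inr rfl)
    nlinarith [Real.exp_pos C]
  have hψνlow : Real.exp (-C) ≤ ∫ x, Real.exp (ψ x) ∂ν := by
    calc Real.exp (-C) = ∫ _x, Real.exp (-C) ∂ν := by simp
    _ ≤ _ := integral_mono (integrable_const _) hexpψ
        (fun x => Real.exp_le_exp.mpr (by linarith [(abs_le.mp (hψb x)).1]))
  have hφνpos : 0 < ∫ x, Real.exp (φ x) ∂ν := integral_exp_pos hexpφ
  have hψνpos : 0 < ∫ x, Real.exp (ψ x) ∂ν := lt_of_lt_of_le (Real.exp_pos _) hψνlow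
  have hlog : Real.log (∫ x, Real.exp (φ x) ∂ν) ≤
      Real.log (∫ x, Real.exp (ψ x) ∂ν) + Real.exp (2*C) * δ := by
    have h1 : Real.log (∫ x, Real.exp (φ x) ∂ν) ≤
        Real.log (∫ x, Real.exp (ψ x) ∂ν + Real.exp C * δ) := Real.log_le_log hφνpos hEν
    set a := ∫ x, Real.exp (ψ x) ∂ν with ha
    set t := Real.exp C * δ with htdef
    have ht : 0 ≤ t := by positivity
    have h2 : Real.log (a + t) - Real.log a ≤ t / a := by
      rw [← Real.log_div (by positivity) (ne_of_gt hψνpos)]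
      have hl := Real.log_le_sub_one_of_pos (x := (a+t)/a) (by positivity)
      have ha' : (a + t)/a - 1 = t / a := by field_simp; ring
      linarith
    have h3 : t / a ≤ Real.exp (2*C) * δ := by
      rw [div_le_iff₀ hψνpos]
      have hee : Real.exp (2*C) * Real.exp (-C) = Real.exp C := by
        rw [← Real.exp_add]; ring_nf
      calc t = Real.exp (2*C) * δ * Real.exp (-C) := by rw [htdef, ← hee]; ring
      _ ≤ Real.exp (2*C) * δ * a := by
          exact mul_le_mul_of_nonneg_left hψνlow (by positivity)
    linarith
  refine ⟨φ, ?_⟩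
  have h1 : ∫ x, ψ x ∂μ - δ ≤ ∫ x, φ x ∂μ := by
    have := abs_le.mp hIμ; linarith
  have hfinal : δ + Real.exp (2*C) * δ ≤ ε := by
    have h2 : δ * (2 * (1 + Real.exp (2*C))) = ε := by
      rw [hδdef]; field_simp
    nlinarith [Real.exp_pos (2*C), hδ.le]
  linarith



lemma clamp_ge_aux {t n : ℝ} (hn : 0 ≤ n) :
    min (max t 0) n - max (-t) 0 ≤ max (min t n) (-n) := by
  rcases le_total t 0 with h | h
  · have h1 : min t n = t := min_eq_left (le_trans h hn)
    have h2 : max t 0 = 0 := max_eq_right h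
    have h3 : max (-t) 0 = -t := max_eq_left (by linarith)
    have h4 : min (0:ℝ) n = 0 := min_eq_left hn
    rw [h2, h4, h3, h1]
    linarith [le_max_left t (-n)]
  · have h2 : max t 0 = t := max_eq_left h
    have h3 : max (-t) 0 = 0 := max_eq_right (by linarith)
    rw [h2, h3]
    linarith [le_max_left (min t n) (-n)]

lemma aux_negpart {X : Type*} [MeasurableSpace X] {μ ν : Measure X}
    [IsProbabilityMeasure μ] [IsProbabilityMeasure ν] (hμν : μ ≪ ν) :
    Integrable (fun x => max (-(Real.log (μ.rnDeriv ν x).toReal)) 0) μ := by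
  have hgm : Measurable fun x => (μ.rnDeriv ν x).toReal :=
    (Measure.measurable_rnDeriv μ ν).ennreal_toReal
  have hum : Measurable fun x => max (-(Real.log (μ.rnDeriv ν x).toReal)) 0 :=
    (Real.measurable_log.comp hgm).neg.max measurable_const
  refine ⟨hum.aestronglyMeasurable, ?_⟩
  have h0 : 0 ≤ᵐ[μ] fun x => max (-(Real.log (μ.rnDeriv ν x).toReal)) 0 :=
    Eventually.of_forall fun x => le_max_right _ _
  rw [hasFiniteIntegral_iff_ofReal h0]
  have heq : ∫⁻ x, ENNReal.ofReal (max (-(Real.log (μ.rnDeriv ν x).toReal)) 0) ∂μ =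
      ∫⁻ x, μ.rnDeriv ν x * ENNReal.ofReal (max (-(Real.log (μ.rnDeriv ν x).toReal)) 0) ∂ν :=
    (MeasureTheory.lintegral_rnDeriv_mul hμν hum.ennreal_ofReal.aemeasurable).symm
  rw [heq]
  have hb : ∀ᵐ x ∂ν, μ.rnDeriv ν x *
      ENNReal.ofReal (max (-(Real.log (μ.rnDeriv ν x).toReal)) 0) ≤ 1 := by
    filter_upwards [Measure.rnDeriv_lt_top μ ν] with x hx
    calc μ.rnDeriv ν x * ENNReal.ofReal (max (-(Real.log (μ.rnDeriv ν x).toReal)) 0)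
        = ENNReal.ofReal ((μ.rnDeriv ν x).toReal *
            max (-(Real.log (μ.rnDeriv ν x).toReal)) 0) := by
          rw [ENNReal.ofReal_mul ENNReal.toReal_nonneg]
          congr 1
          exact (ENNReal.ofReal_toReal hx.ne).symm
    _ ≤ ENNReal.ofReal 1 := ENNReal.ofReal_le_ofReal (mul_neg_log_le_one' ENNReal.toReal_nonneg)
    _ = 1 := ENNReal.ofReal_one
  calc ∫⁻ x, μ.rnDeriv ν x *
        ENNReal.ofReal (max (-(Real.log (μ.rnDeriv ν x).toReal)) 0) ∂ν
      ≤ ∫⁻ _x, 1 ∂ν := lintegral_mono_ae hb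
  _ = 1 := by simp
  _ < ⊤ := ENNReal.one_lt_top

noncomputable def psiN {X : Type*} [MeasurableSpace X] (μ ν : Measure X) (n : ℕ) (x : X) : ℝ :=
  Real.log (max (min ((μ.rnDeriv ν x).toReal) (Real.exp (n:ℝ))) (Real.exp (-(n:ℝ))))

section PsiN
variable {X : Type*} [MeasurableSpace X] (μ ν : Measure X)

lemma psiN_argpos (n : ℕ) (x : X) :
    (0:ℝ) < max (min ((μ.rnDeriv ν x).toReal) (Real.exp (n:ℝ))) (Real.exp (-(n:ℝ))) :=
  lt_of_lt_of_le (Real.exp_pos _) (le_max_right _ _)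

lemma psiN_meas (n : ℕ) : Measurable (psiN μ ν n) :=
  Real.measurable_log.comp
    (((Measure.measurable_rnDeriv μ ν).ennreal_toReal.min measurable_const).max measurable_const)

lemma psiN_abs_le (n : ℕ) (x : X) : |psiN μ ν n x| ≤ (n:ℝ) := by
  rw [abs_le]
  constructor
  · calc -(n:ℝ) = Real.log (Real.exp (-(n:ℝ))) := (Real.log_exp _).symm
    _ ≤ _ := Real.log_le_log (Real.exp_pos _) (le_max_right _ _)
  · calc psiN μ ν n x ≤ Real.log (Real.exp (n:ℝ)) :=
        Real.log_le_log (psiN_argpos μ ν n x)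
          (max_le (min_le_right _ _) (Real.exp_le_exp.mpr (by
            have : (0:ℝ) ≤ (n:ℝ) := Nat.cast_nonneg n
            linarith)))
    _ = (n:ℝ) := Real.log_exp _

lemma psiN_exp (n : ℕ) (x : X) : Real.exp (psiN μ ν n x)
    = max (min ((μ.rnDeriv ν x).toReal) (Real.exp (n:ℝ))) (Real.exp (-(n:ℝ))) :=
  Real.exp_log (psiN_argpos μ ν n x)

lemma psiN_clamp (n : ℕ) (x : X) (hx : 0 < (μ.rnDeriv ν x).toReal) :
    psiN μ ν n x = max (min (Real.log (μ.rnDeriv ν x).toReal) (n:ℝ)) (-(n:ℝ)) := by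
  have h1 : max (min ((μ.rnDeriv ν x).toReal) (Real.exp (n:ℝ))) (Real.exp (-(n:ℝ)))
      = Real.exp (max (min (Real.log (μ.rnDeriv ν x).toReal) (n:ℝ)) (-(n:ℝ))) := by
    rw [Real.exp_strictMono.monotone.map_max, Real.exp_strictMono.monotone.map_min,
      Real.exp_log hx]
  rw [psiN, h1, Real.log_exp]

variable [IsProbabilityMeasure μ] [IsProbabilityMeasure ν]

lemma psiN_int (n : ℕ) : Integrable (psiN μ ν n) μ :=
  integrable_of_abs_le' (psiN_meas μ ν n).aestronglyMeasurable (psiN_abs_le μ ν n)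

lemma psiN_exp_int (n : ℕ) : Integrable (fun x => Real.exp (psiN μ ν n x)) ν := by
  refine integrable_of_abs_le' (Real.measurable_exp.comp (psiN_meas μ ν n)).aestronglyMeasurable
    (C := Real.exp (n:ℝ)) (fun x => ?_)
  rw [abs_of_nonneg (Real.exp_pos _).le]
  exact Real.exp_le_exp.mpr (abs_le.mp (psiN_abs_le μ ν n x)).2

lemma psiN_exp_low (n : ℕ) : Real.exp (-(n:ℝ)) ≤ ∫ x, Real.exp (psiN μ ν n x) ∂ν := by
  calc Real.exp (-(n:ℝ)) = ∫ _x, Real.exp (-(n:ℝ)) ∂ν := by simp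
  _ ≤ _ := integral_mono (integrable_const _) (psiN_exp_int μ ν n)
      (fun x => by rw [psiN_exp μ ν n x]; exact le_max_right _ _)

lemma psiN_logE (n : ℕ) :
    Real.log (∫ x, Real.exp (psiN μ ν n x) ∂ν) ≤ Real.exp (-(n:ℝ)) := by
  have hgint : Integrable (fun x => (μ.rnDeriv ν x).toReal) ν :=
    Measure.integrable_toReal_rnDeriv
  have hgint1 : ∫ x, (μ.rnDeriv ν x).toReal ∂ν ≤ 1 := by
    rw [Measure.integral_toReal_rnDeriv']
    simp only [measureReal_def, measure_univ, ENNReal.toReal_one]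
    have := ENNReal.toReal_nonneg (a := μ.singularPart ν Set.univ)
    linarith
  have hEup : ∫ x, Real.exp (psiN μ ν n x) ∂ν ≤ 1 + Real.exp (-(n:ℝ)) := by
    have hptw : ∀ x, Real.exp (psiN μ ν n x) ≤ (μ.rnDeriv ν x).toReal + Real.exp (-(n:ℝ)) := by
      intro x
      rw [psiN_exp μ ν n x]
      refine max_le (le_trans (min_le_left _ _) (by linarith [Real.exp_pos (-(n:ℝ))])) ?_
      have : (0:ℝ) ≤ (μ.rnDeriv ν x).toReal := ENNReal.toReal_nonneg
      linarith
    calc ∫ x, Real.exp (psiN μ ν n x) ∂ν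
        ≤ ∫ x, ((μ.rnDeriv ν x).toReal + Real.exp (-(n:ℝ))) ∂ν :=
          integral_mono (psiN_exp_int μ ν n) (hgint.add (integrable_const _)) hptw
    _ = ∫ x, (μ.rnDeriv ν x).toReal ∂ν + Real.exp (-(n:ℝ)) := by
          rw [integral_add hgint (integrable_const _)]; simp
    _ ≤ 1 + Real.exp (-(n:ℝ)) := by linarith
  have hpos : (0:ℝ) < ∫ x, Real.exp (psiN μ ν n x) ∂ν :=
    lt_of_lt_of_le (Real.exp_pos _) (psiN_exp_low μ ν n)
  calc Real.log (∫ x, Real.exp (psiN μ ν n x) ∂ν) ≤ Real.log (1 + Real.exp (-(n:ℝ))) :=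
        Real.log_le_log hpos hEup
  _ ≤ 1 + Real.exp (-(n:ℝ)) - 1 := Real.log_le_sub_one_of_pos (by positivity)
  _ = Real.exp (-(n:ℝ)) := by ring

end PsiN

lemma aux_claim {X : Type*} [MeasurableSpace X] {μ ν : Measure X}
    [IsProbabilityMeasure μ] [IsProbabilityMeasure ν] (c : ℝ) (hc : (c : EReal) < klDiv μ ν) :
    ∃ ψ : X → ℝ, Measurable ψ ∧ (∃ C, 0 ≤ C ∧ ∀ x, |ψ x| ≤ C) ∧
      c < ∫ x, ψ x ∂μ - Real.log (∫ x, Real.exp (ψ x) ∂ν) := by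
  have hgm : Measurable fun x => (μ.rnDeriv ν x).toReal :=
    (Measure.measurable_rnDeriv μ ν).ennreal_toReal
  have hfm : Measurable fun x => Real.log (μ.rnDeriv ν x).toReal :=
    Real.measurable_log.comp hgm
  by_cases hac : μ ≪ ν
  · have hgpos : ∀ᵐ x ∂μ, 0 < (μ.rnDeriv ν x).toReal := by
      filter_upwards [Measure.rnDeriv_pos hac, hac.ae_le (Measure.rnDeriv_lt_top μ ν)]
        with x h1 h2
      exact ENNReal.toReal_pos h1.ne' h2.ne
    by_cases hfi : Integrable (fun x => Real.log (μ.rnDeriv ν x).toReal) μ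
    · -- finite KL case
      have hklev : klDiv μ ν = ((∫ x, Real.log (μ.rnDeriv ν x).toReal ∂μ : ℝ) : EReal) :=
        if_pos ⟨hac, hfi⟩
      rw [hklev, EReal.coe_lt_coe_iff] at hc
      have htend : Tendsto (fun n : ℕ => ∫ x, psiN μ ν n x ∂μ) atTop
          (𝓝 (∫ x, Real.log (μ.rnDeriv ν x).toReal ∂μ)) := by
        refine tendsto_integral_of_dominated_convergence
          (fun x => |Real.log (μ.rnDeriv ν x).toReal|)
          (fun n => (psiN_meas μ ν n).aestronglyMeasurable) hfi.abs (fun n => ?_) ?_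
        · filter_upwards [hgpos] with x hx
          rw [psiN_clamp μ ν n x hx, Real.norm_eq_abs]
          exact clamp_abs_le' (Nat.cast_nonneg n)
        · filter_upwards [hgpos] with x hx
          refine tendsto_atTop_of_eventually_const
            (i₀ := ⌈|Real.log (μ.rnDeriv ν x).toReal|⌉₊) (fun n hn => ?_)
          rw [psiN_clamp μ ν n x hx]
          have hfn : |Real.log (μ.rnDeriv ν x).toReal| ≤ (n:ℝ) :=
            le_trans (Nat.le_ceil _) (Nat.cast_le.mpr hn)
          have h1 := abs_le.mp hfn
          rw [min_eq_left h1.2, max_eq_left (by linarith)]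
      have hexp0 : Tendsto (fun n : ℕ => Real.exp (-(n:ℝ))) atTop (𝓝 0) :=
        Real.tendsto_exp_neg_atTop_nhds_zero.comp tendsto_natCast_atTop_atTop
      set A := ∫ x, Real.log (μ.rnDeriv ν x).toReal ∂μ with hA
      set ε₀ := (A - c) / 2 with hε₀
      have hε₀pos : 0 < ε₀ := by rw [hε₀]; linarith
      have hev1 : ∀ᶠ n : ℕ in atTop, c + ε₀ < ∫ x, psiN μ ν n x ∂μ :=
        htend.eventually (eventually_gt_nhds (by rw [hε₀]; linarith))
      have hev2 : ∀ᶠ n : ℕ in atTop, Real.exp (-(n:ℝ)) < ε₀ :=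
        hexp0.eventually (eventually_lt_nhds hε₀pos)
      obtain ⟨n, h1, h2⟩ := (hev1.and hev2).exists
      exact ⟨psiN μ ν n, psiN_meas μ ν n, ⟨(n:ℝ), Nat.cast_nonneg n, psiN_abs_le μ ν n⟩,
        by linarith [psiN_logE μ ν n]⟩
    · -- infinite KL, absolutely continuous
      have hFm : Measurable fun x => max (Real.log (μ.rnDeriv ν x).toReal) 0 :=
        hfm.max measurable_const
      have hneg : Integrable (fun x => max (-(Real.log (μ.rnDeriv ν x).toReal)) 0) μ :=
        aux_negpart hac
      have hFni : ¬ Integrable (fun x => max (Real.log (μ.rnDeriv ν x).toReal) 0) μ := by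
        intro hFi
        refine hfi ((hFi.sub hneg).congr (Eventually.of_forall fun x => ?_))
        simp only [Pi.sub_apply]
        rcases le_total (Real.log (μ.rnDeriv ν x).toReal) 0 with h | h
        · rw [max_eq_right h, max_eq_left (by linarith)]; ring
        · rw [max_eq_left h, max_eq_right (by linarith)]; ring
      have hFlint : ∫⁻ x, ENNReal.ofReal (max (Real.log (μ.rnDeriv ν x).toReal) 0) ∂μ = ⊤ := by
        by_contra hne
        refine hFni ⟨hFm.aestronglyMeasurable, ?_⟩
        have h0 : 0 ≤ᵐ[μ] fun x => max (Real.log (μ.rnDeriv ν x).toReal) 0 :=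
          Eventually.of_forall fun x => le_max_right _ _
        rw [hasFiniteIntegral_iff_ofReal h0]
        exact lt_top_iff_ne_top.mpr hne
      have hsupF : ∀ M : ℝ, ∃ n : ℕ,
          M < ∫ x, min (max (Real.log (μ.rnDeriv ν x).toReal) 0) (n:ℝ) ∂μ := by
        intro M
        have hmono : Monotone (fun n : ℕ => fun x =>
            ENNReal.ofReal (min (max (Real.log (μ.rnDeriv ν x).toReal) 0) (n:ℝ))) := by
          intro m n hmn x
          exact ENNReal.ofReal_le_ofReal (min_le_min le_rfl (Nat.cast_le.mpr hmn))
        have hsup : (⨆ n : ℕ, ∫⁻ x,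
            ENNReal.ofReal (min (max (Real.log (μ.rnDeriv ν x).toReal) 0) (n:ℝ)) ∂μ) = ⊤ := by
          rw [← lintegral_iSup (fun n => (hFm.min measurable_const).ennreal_ofReal) hmono,
            ← hFlint]
          congr 1
          ext x
          refine le_antisymm (iSup_le fun n => ENNReal.ofReal_le_ofReal (min_le_left _ _)) ?_
          have heq : ENNReal.ofReal (max (Real.log (μ.rnDeriv ν x).toReal) 0)
              = ENNReal.ofReal (min (max (Real.log (μ.rnDeriv ν x).toReal) 0)
                  ((⌈max (Real.log (μ.rnDeriv ν x).toReal) 0⌉₊ : ℕ):ℝ)) := by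
            rw [min_eq_left (Nat.le_ceil _)]
          rw [heq]
          exact le_iSup (fun n : ℕ => ENNReal.ofReal
            (min (max (Real.log (μ.rnDeriv ν x).toReal) 0) (n:ℝ)))
            ⌈max (Real.log (μ.rnDeriv ν x).toReal) 0⌉₊
        have hlt : ENNReal.ofReal (max M 0) < ⨆ n : ℕ, ∫⁻ x,
            ENNReal.ofReal (min (max (Real.log (μ.rnDeriv ν x).toReal) 0) (n:ℝ)) ∂μ := by
          rw [hsup]; exact ENNReal.ofReal_lt_top
        obtain ⟨n, hn⟩ := lt_iSup_iff.mp hlt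
        refine ⟨n, ?_⟩
        have hFn_nonneg : ∀ x, 0 ≤ min (max (Real.log (μ.rnDeriv ν x).toReal) 0) (n:ℝ) :=
          fun x => le_min (le_max_right _ _) (Nat.cast_nonneg n)
        have hieq : ∫ x, min (max (Real.log (μ.rnDeriv ν x).toReal) 0) (n:ℝ) ∂μ
            = (∫⁻ x, ENNReal.ofReal
                (min (max (Real.log (μ.rnDeriv ν x).toReal) 0) (n:ℝ)) ∂μ).toReal := by
          rw [integral_eq_lintegral_of_nonneg_ae (Eventually.of_forall hFn_nonneg)
            (hFm.min measurable_const).aestronglyMeasurable]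
        have hfin : ∫⁻ x, ENNReal.ofReal
            (min (max (Real.log (μ.rnDeriv ν x).toReal) 0) (n:ℝ)) ∂μ ≠ ⊤ := by
          refine ne_of_lt (lt_of_le_of_lt (lintegral_mono (fun x =>
            ENNReal.ofReal_le_ofReal (min_le_right _ _)))
            (?_ : ∫⁻ _x, ENNReal.ofReal (n:ℝ) ∂μ < ⊤))
          simp [lintegral_const]
        have hlt2 := (ENNReal.ofReal_lt_iff_lt_toReal (le_max_right M 0) hfin).mp hn
        rw [hieq]
        exact lt_of_le_of_lt (le_max_left M 0) hlt2
      obtain ⟨n, hn⟩ := hsupF (c + 1 + ∫ x, max (-(Real.log (μ.rnDeriv ν x).toReal)) 0 ∂μ)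
      have hminint : Integrable
          (fun x => min (max (Real.log (μ.rnDeriv ν x).toReal) 0) (n:ℝ)) μ :=
        integrable_of_abs_le' (hFm.min measurable_const).aestronglyMeasurable (C := (n:ℝ))
          (fun x => by
            rw [abs_of_nonneg (le_min (le_max_right _ _) (Nat.cast_nonneg n))]
            exact min_le_right _ _)
      have hlow : ∫ x, (min (max (Real.log (μ.rnDeriv ν x).toReal) 0) (n:ℝ)
          - max (-(Real.log (μ.rnDeriv ν x).toReal)) 0) ∂μ ≤ ∫ x, psiN μ ν n x ∂μ := by
        refine integral_mono_ae (hminint.sub hneg) (psiN_int μ ν n) ?_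
        filter_upwards [hgpos] with x hx
        rw [psiN_clamp μ ν n x hx]
        exact clamp_ge_aux (Nat.cast_nonneg n)
      rw [integral_sub hminint hneg] at hlow
      have hlog1 : Real.log (∫ x, Real.exp (psiN μ ν n x) ∂ν) ≤ 1 :=
        le_trans (psiN_logE μ ν n) (by
          calc Real.exp (-(n:ℝ)) ≤ Real.exp 0 := Real.exp_le_exp.mpr (by
                have : (0:ℝ) ≤ (n:ℝ) := Nat.cast_nonneg n
                linarith)
          _ = 1 := Real.exp_zero)
      exact ⟨psiN μ ν n, psiN_meas μ ν n, ⟨(n:ℝ), Nat.cast_nonneg n, psiN_abs_le μ ν n⟩,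
        by linarith⟩
  · -- not absolutely continuous
    have hex : ∃ s : Set X, MeasurableSet s ∧ ν s = 0 ∧ μ s ≠ 0 := by
      by_contra h
      push_neg at h
      exact hac (Measure.AbsolutelyContinuous.mk fun s hs h0 => h s hs h0)
    obtain ⟨A, hA, hν0, hμ0⟩ := hex
    have hm : 0 < (μ A).toReal := ENNReal.toReal_pos hμ0 (measure_ne_top _ _)
    set t : ℝ := (|c| + 1) / (μ A).toReal with ht
    have htpos : 0 < t := by positivity
    set ψ : X → ℝ := A.indicator (fun _ => t) with hψ
    have hψm : Measurable ψ := measurable_const.indicator hA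
    have hψb : ∀ x, |ψ x| ≤ t := by
      intro x
      rw [hψ]
      by_cases hx : x ∈ A
      · rw [Set.indicator_of_mem hx, abs_of_pos htpos]
      · rw [Set.indicator_of_notMem hx]; simpa using htpos.le
    have hInt : ∫ x, ψ x ∂μ = t * (μ A).toReal := by
      rw [hψ, integral_indicator_const _ hA]
      simp [mul_comm]
      exact Or.inl rfl
    have hExp : ∫ x, Real.exp (ψ x) ∂ν = 1 := by
      have hae : (fun x => Real.exp (ψ x)) =ᵐ[ν] fun _ => 1 := by
        have hmem : ∀ᵐ x ∂ν, x ∉ A := by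
          rw [ae_iff]
          simpa using hν0
        filter_upwards [hmem] with x hx
        rw [hψ, Set.indicator_of_notMem hx, Real.exp_zero]
      rw [integral_congr_ae hae]
      simp
    refine ⟨ψ, hψm, ⟨t, htpos.le, hψb⟩, ?_⟩
    rw [hInt, hExp, Real.log_one, sub_zero]
    have heq : t * (μ A).toReal = |c| + 1 := by
      rw [ht]; field_simp
    rw [heq]
    calc c ≤ |c| := le_abs_self c
    _ < |c| + 1 := by linarith






theorem kl_duality {X : Type*} [MeasurableSpace X] [TopologicalSpace X] [PolishSpace X]
    [BorelSpace X] (μ ν : Measure X) [IsProbabilityMeasure μ] [IsProbabilityMeasure ν] :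
    klDiv μ ν =
      ⨆ φ : BoundedContinuousFunction X ℝ,
        (((∫ x, φ x ∂μ) - Real.log (∫ x, Real.exp (φ x) ∂ν) : ℝ) : EReal) := by
  refine le_antisymm ?_ ?_
  · by_contra hlt
    push_neg at hlt
    obtain ⟨c, hc1, hc2⟩ := EReal.exists_between_coe_real hlt
    obtain ⟨ψ, hm, ⟨C, hC0, hCb⟩, hval⟩ := aux_claim (μ := μ) (ν := ν) c hc2
    have hεpos : 0 < (∫ x, ψ x ∂μ - Real.log (∫ x, Real.exp (ψ x) ∂ν)) - c := by linarith
    obtain ⟨φ, hφ⟩ := aux_approx (μ := μ) (ν := ν) hC0 hm hCb hεpos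
    have h1 : (c : EReal) ≤ ((∫ x, φ x ∂μ - Real.log (∫ x, Real.exp (φ x) ∂ν) : ℝ) : EReal) :=
      EReal.coe_le_coe_iff.mpr (by linarith)
    have h2 := le_iSup (fun φ : BoundedContinuousFunction X ℝ =>
      ((∫ x, φ x ∂μ - Real.log (∫ x, Real.exp (φ x) ∂ν) : ℝ) : EReal)) φ
    exact absurd (le_trans h1 h2) (not_le.mpr hc1)
  · refine iSup_le fun φ => ?_
    rw [klDiv]
    split_ifs with h
    · exact EReal.coe_le_coe_iff.mpr (aux_gibbs h.1 h.2 φ.continuous.measurable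
        (fun x => by simpa [Real.norm_eq_abs] using φ.norm_coe_le_norm x))
    · exact le_top
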